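/- For all x, y in the open unit disk 𝔹² with |x+y|(1 + 4/(|x+y|² + |x-y|²)) > 4, we have τ̃_{𝔹²}(x,y) ≥ log(1 + 2|x-y| / √((2 - |x+y|)² + |x-y|²)). -/

import Mathlib

set_option maxHeartbeats 1000000

/-- The scale invariant Cassinian metric
`τ̃_D(x,y) = log(1 + sup_{p ∈ ∂D} |x-y|/√(|x-p||y-p|))`. -/
noncomputable def scTau {E : Type*} [NormedAddCommGroup E] (D : Set E) (x y : E) : ℝ :=
  Real.log (1 + ⨆ p : frontier D, ‖x - y‖ / Real.sqrt (‖x - (p : E)‖ * ‖y - (p : E)‖))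

theorem stmt8 (x y : EuclideanSpace ℝ (Fin 2))
    (hx : x ∈ Metric.ball (0 : EuclideanSpace ℝ (Fin 2)) 1)
    (hy : y ∈ Metric.ball (0 : EuclideanSpace ℝ (Fin 2)) 1)
    (h : ‖x + y‖ * (1 + 4 / (‖x + y‖ ^ 2 + ‖x - y‖ ^ 2)) > 4) :
    scTau (Metric.ball (0 : EuclideanSpace ℝ (Fin 2)) 1) x y
      ≥ Real.log (1 + 2 * ‖x - y‖ / Real.sqrt ((2 - ‖x + y‖) ^ 2 + ‖x - y‖ ^ 2)) := by
  set D := Metric.ball (0 : EuclideanSpace ℝ (Fin 2)) 1 with hD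
  have ha : ‖x‖ < 1 := mem_ball_zero_iff.mp hx
  have hb : ‖y‖ < 1 := mem_ball_zero_iff.mp hy
  -- x + y ≠ 0
  have hs0 : x + y ≠ 0 := by
    intro h0
    rw [h0] at h
    simp at h
    linarith
  have hs : (0:ℝ) < ‖x + y‖ := norm_pos_iff.mpr hs0
  set s := ‖x + y‖ with hsdef
  set d := ‖x - y‖ with hddef
  set a := ‖x‖ with hadef
  set b := ‖y‖ with hbdef
  set c := (inner ℝ x y : ℝ) with hcdef
  have hs2 : s ^ 2 = a ^ 2 + 2 * c + b ^ 2 := norm_add_sq_real x y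
  have hd2 : d ^ 2 = a ^ 2 - 2 * c + b ^ 2 := norm_sub_sq_real x y
  have hslt2 : s < 2 := lt_of_le_of_lt (norm_add_le x y) (by linarith)
  -- the boundary point
  set p : EuclideanSpace ℝ (Fin 2) := s⁻¹ • (x + y) with hpdef
  have hpnorm : ‖p‖ = 1 := by
    rw [hpdef, norm_smul, Real.norm_eq_abs, abs_of_pos (inv_pos.mpr hs), ← hsdef,
      inv_mul_cancel₀ hs.ne']
  have hfront : frontier D = Metric.sphere (0 : EuclideanSpace ℝ (Fin 2)) 1 :=
    frontier_ball 0 one_ne_zero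
  have hpmem : p ∈ frontier D := by
    rw [hfront, mem_sphere_zero_iff_norm]; exact hpnorm
  -- norms to p
  have hxp : ‖x - p‖ ^ 2 = a ^ 2 - 2 * (s⁻¹ * (a ^ 2 + c)) + 1 := by
    have : (inner ℝ x p : ℝ) = s⁻¹ * (a ^ 2 + c) := by
      rw [hpdef, real_inner_smul_right, inner_add_right,
        real_inner_self_eq_norm_sq]
    rw [norm_sub_sq_real, this, hpnorm]
    ring
  have hyp : ‖y - p‖ ^ 2 = b ^ 2 - 2 * (s⁻¹ * (b ^ 2 + c)) + 1 := by
    have : (inner ℝ y p : ℝ) = s⁻¹ * (b ^ 2 + c) := by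
      rw [hpdef, real_inner_smul_right, inner_add_right,
        real_inner_self_eq_norm_sq, real_inner_comm]
      simp only [hcdef, hbdef]
      ring
    rw [norm_sub_sq_real, this, hpnorm]
    ring
  set A : ℝ := ((2 - s) ^ 2 + d ^ 2) / 4 with hAdef
  have hA0 : 0 < A := by
    rw [hAdef]
    have : 0 < (2 - s) ^ 2 := pow_pos (by linarith) 2
    nlinarith [sq_nonneg d]
  have hc' : c = (s ^ 2 - a ^ 2 - b ^ 2) / 2 := by linarith
  -- key product bound
  have e1 : s * ‖x - p‖ ^ 2 = s * (a ^ 2 + 1) - 2 * (a ^ 2 + c) := by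
    rw [hxp]; field_simp; ring
  have e2 : s * ‖y - p‖ ^ 2 = s * (b ^ 2 + 1) - 2 * (b ^ 2 + c) := by
    rw [hyp]; field_simp; ring
  have hAe : A = 1 - s + (a ^ 2 + b ^ 2) / 2 := by
    rw [hAdef]; linear_combination (hs2 + hd2) / 4
  have h3 : (s * ‖x - p‖ ^ 2) * (s * ‖y - p‖ ^ 2) ≤ (s * A) ^ 2 := by
    rw [e1, e2, hAe, hc']
    have key : (s * (a ^ 2 + 1) - 2 * (a ^ 2 + (s ^ 2 - a ^ 2 - b ^ 2) / 2)) *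
        (s * (b ^ 2 + 1) - 2 * (b ^ 2 + (s ^ 2 - a ^ 2 - b ^ 2) / 2))
        = (s * (1 - s + (a ^ 2 + b ^ 2) / 2)) ^ 2
          - ((a ^ 2 - b ^ 2) * (s - 2) / 2) ^ 2 := by ring
    rw [key]
    nlinarith [sq_nonneg ((a ^ 2 - b ^ 2) * (s - 2) / 2)]
  have hprodsq : ‖x - p‖ ^ 2 * ‖y - p‖ ^ 2 ≤ A ^ 2 := by
    have hs2' : 0 < s ^ 2 := by positivity
    nlinarith [h3]
  have hprodle : ‖x - p‖ * ‖y - p‖ ≤ A := by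
    nlinarith [hprodsq, hA0.le, mul_nonneg (norm_nonneg (x - p)) (norm_nonneg (y - p))]
  -- positivity of the product
  have hxpne : x ≠ p := by
    intro hxx; rw [hadef, hxx, hpnorm] at ha; linarith
  have hypne : y ≠ p := by
    intro hyy; rw [hbdef, hyy, hpnorm] at hb; linarith
  have hxppos : 0 < ‖x - p‖ := norm_pos_iff.mpr (sub_ne_zero.mpr hxpne)
  have hyppos : 0 < ‖y - p‖ := norm_pos_iff.mpr (sub_ne_zero.mpr hypne)
  have hprodpos : 0 < ‖x - p‖ * ‖y - p‖ := mul_pos hxppos hyppos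
  -- target term ≤ value at p
  have hsqrtle : Real.sqrt (‖x - p‖ * ‖y - p‖) ≤ Real.sqrt A :=
    Real.sqrt_le_sqrt hprodle
  have hsqrtpos : 0 < Real.sqrt (‖x - p‖ * ‖y - p‖) := Real.sqrt_pos.mpr hprodpos
  have h4 : Real.sqrt ((2 - s) ^ 2 + d ^ 2) = 2 * Real.sqrt A := by
    have h44 : (2 - s) ^ 2 + d ^ 2 = 2 ^ 2 * A := by rw [hAdef]; ring
    rw [h44, Real.sqrt_mul (by positivity) A,
      Real.sqrt_sq (by norm_num : (0:ℝ) ≤ 2)]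
  have hT : 2 * d / Real.sqrt ((2 - s) ^ 2 + d ^ 2)
      ≤ d / Real.sqrt (‖x - p‖ * ‖y - p‖) := by
    rw [h4]
    have hAr : 0 < Real.sqrt A := Real.sqrt_pos.mpr hA0
    rw [show 2 * d / (2 * Real.sqrt A) = d / Real.sqrt A by
      field_simp]
    exact div_le_div_of_nonneg_left (norm_nonneg _) hsqrtpos hsqrtle
  -- bounded above
  have hbdd : BddAbove (Set.range fun q : frontier D =>
      ‖x - y‖ / Real.sqrt (‖x - (q : EuclideanSpace ℝ (Fin 2))‖ * ‖y - (q : EuclideanSpace ℝ (Fin 2))‖)) := by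
    refine ⟨d / Real.sqrt ((1 - a) * (1 - b)), ?_⟩
    rintro r ⟨q, rfl⟩
    have hq : ‖(q : EuclideanSpace ℝ (Fin 2))‖ = 1 :=
      mem_sphere_zero_iff_norm.mp (hfront.subset q.2)
    have h1a : 1 - a ≤ ‖x - (q : EuclideanSpace ℝ (Fin 2))‖ := by
      have h := norm_sub_norm_le (q : EuclideanSpace ℝ (Fin 2)) x
      rw [hq, norm_sub_rev] at h
      exact h
    have h1b : 1 - b ≤ ‖y - (q : EuclideanSpace ℝ (Fin 2))‖ := by
      have h := norm_sub_norm_le (q : EuclideanSpace ℝ (Fin 2)) y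
      rw [hq, norm_sub_rev] at h
      exact h
    have hpos : (0:ℝ) < (1 - a) * (1 - b) :=
      mul_pos (by linarith) (by linarith)
    have hle : (1 - a) * (1 - b) ≤ ‖x - (q : EuclideanSpace ℝ (Fin 2))‖ * ‖y - (q : EuclideanSpace ℝ (Fin 2))‖ :=
      mul_le_mul h1a h1b (by linarith) (norm_nonneg _)
    have hsq : Real.sqrt ((1 - a) * (1 - b)) ≤ Real.sqrt (‖x - (q : EuclideanSpace ℝ (Fin 2))‖ * ‖y - (q : EuclideanSpace ℝ (Fin 2))‖) :=
      Real.sqrt_le_sqrt hle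
    have hsp : 0 < Real.sqrt ((1 - a) * (1 - b)) := Real.sqrt_pos.mpr hpos
    exact div_le_div_of_nonneg_left (norm_nonneg _) hsp hsq
  have hsup : d / Real.sqrt (‖x - p‖ * ‖y - p‖)
      ≤ ⨆ q : frontier D, ‖x - y‖ / Real.sqrt (‖x - (q : EuclideanSpace ℝ (Fin 2))‖ * ‖y - (q : EuclideanSpace ℝ (Fin 2))‖) :=
    le_ciSup hbdd ⟨p, hpmem⟩
  -- conclude
  have hTnn : 0 ≤ 2 * d / Real.sqrt ((2 - s) ^ 2 + d ^ 2) := by positivity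
  rw [scTau, ge_iff_le]
  exact Real.log_le_log (by linarith) (by linarith)
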